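/- For any z = (z_1,...,z_m) with all z_j ≥ 0, the power sum kernel k_z : S_n × S_n → ℝ is positive semidefinite: for any permutations g_1,...,g_N ∈ S_n and reals a_1,...,a_N, one has Σ_{i,j} a_i a_j k_z(g_i, g_j) ≥ 0. -/

import Mathlib

/-- The cycle lengths of a permutation, including fixed points as cycles of length 1,
as a multiset (the sorted sequence `μ(g)`). -/
def cycleMu {n : ℕ} (g : Equiv.Perm (Fin n)) : Multiset ℕ :=
  g.cycleType + Multiset.replicate (n - g.cycleType.sum) 1

/-- The power sum kernel `k_z(g,h) = p_{μ(g h⁻¹)}(z) = ∏_j Σ_i z_i^{μ_j}`. -/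
def powerSumKernel {n m : ℕ} (z : Fin m → ℝ) (g h : Equiv.Perm (Fin n)) : ℝ :=
  ((cycleMu (g * h⁻¹)).map (fun d => ∑ i, z i ^ d)).prod

open Equiv Equiv.Perm Finset

namespace PSK

variable {n m : ℕ}

/-- The same-cycle setoid. -/
def sc (σ : Perm (Fin n)) : Setoid (Fin n) :=
  ⟨σ.SameCycle, ⟨fun x => SameCycle.refl σ x, SameCycle.symm, SameCycle.trans⟩⟩

instance instDR (σ : Perm (Fin n)) : DecidableRel (sc σ).r :=
  fun x y => (inferInstance : Decidable (σ.SameCycle x y))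

instance (σ : Perm (Fin n)) : DecidableEq (Quotient (sc σ)) :=
  @Quotient.decidableEq _ (sc σ) (instDR σ)

instance (σ : Perm (Fin n)) : Fintype (Quotient (sc σ)) :=
  @Quotient.fintype _ _ (sc σ) (instDR σ)

/-- size of the class of `q`. -/
def cnt (σ : Perm (Fin n)) (q : Quotient (sc σ)) : ℕ :=
  (Finset.univ.filter fun x => Quotient.mk (sc σ) x = q).card

lemma fix_pows (σ : Perm (Fin n)) {f : Fin n → Fin m} (hf : f ∘ σ = f) :
    ∀ (i : ℤ) (x : Fin n), f ((σ ^ i) x) = f x := by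
  have h1 : ∀ x, f (σ x) = f x := fun x => congrFun hf x
  have h2 : ∀ x, f (σ⁻¹ x) = f x := by
    intro x
    conv_rhs => rw [← Equiv.apply_symm_apply σ x]
    rw [← Equiv.Perm.inv_def, h1]
  intro i
  induction i using Int.induction_on with
  | zero => simp
  | succ k ih => intro x; rw [zpow_add_one, Equiv.Perm.mul_apply, ih, h1]
  | pred k ih => intro x; rw [zpow_sub_one, Equiv.Perm.mul_apply, ih, h2]

lemma lift_wd (σ : Perm (Fin n)) {f : Fin n → Fin m} (hf : f ∘ σ = f) :
    ∀ x y, σ.SameCycle x y → f x = f y := by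
  rintro x y ⟨i, rfl⟩
  exact (fix_pows σ hf i x).symm

lemma mk_apply (σ : Perm (Fin n)) (x : Fin n) :
    Quotient.mk (sc σ) (σ x) = Quotient.mk (sc σ) x :=
  Quotient.sound (sameCycle_apply_right.mpr (SameCycle.refl σ x)).symm

lemma stepA1 (σ : Perm (Fin n)) (z : Fin m → ℝ) :
    (∑ f : Fin n → Fin m, if f ∘ σ = f then (∏ x, z (f x)) else 0)
      = ∑ F : Quotient (sc σ) → Fin m, ∏ x, z (F (Quotient.mk (sc σ) x)) := by
  rw [← Finset.sum_filter]
  refine (Finset.sum_bij' (fun F _ => F ∘ Quotient.mk (sc σ))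
    (fun f hf => fun q => Quotient.liftOn q f
      (lift_wd σ (Finset.mem_filter.mp hf).2)) ?_ ?_ ?_ ?_ ?_).symm
  · intro F _
    refine Finset.mem_filter.mpr ⟨Finset.mem_univ _, ?_⟩
    funext x
    exact congrArg F (mk_apply σ x)
  · intro f hf
    exact Finset.mem_univ _
  · intro F _
    funext q
    induction q using Quotient.ind
    rfl
  · intro f _
    rfl
  · intro F _
    rfl

lemma stepA2 (σ : Perm (Fin n)) (z : Fin m → ℝ) :
    (∑ F : Quotient (sc σ) → Fin m, ∏ x, z (F (Quotient.mk (sc σ) x)))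
      = ∏ q : Quotient (sc σ), ∑ i, z i ^ cnt σ q := by
  have h1 : ∀ F : Quotient (sc σ) → Fin m,
      (∏ x, z (F (Quotient.mk (sc σ) x))) = ∏ q : Quotient (sc σ), z (F q) ^ cnt σ q := by
    intro F
    rw [← Finset.prod_fiberwise_of_maps_to (g := Quotient.mk (sc σ))
      (fun x _ => Finset.mem_univ _) (fun x => z (F (Quotient.mk (sc σ) x)))]
    refine Finset.prod_congr rfl fun q _ => ?_
    rw [show ((Finset.univ.filter fun x => Quotient.mk (sc σ) x = q).prod
        fun x => z (F (Quotient.mk (sc σ) x))) = ∏ _x ∈ (Finset.univ.filter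
        fun x => Quotient.mk (sc σ) x = q), z (F q) from
      Finset.prod_congr rfl fun x hx => by rw [(Finset.mem_filter.mp hx).2]]
    rw [Finset.prod_const, cnt]
  simp_rw [h1]
  rw [← Fintype.piFinset_univ]
  exact (Finset.prod_univ_sum (fun _ => Finset.univ) (fun q i => z i ^ cnt σ q)).symm

lemma stepA3 (σ : Perm (Fin n)) (h : ℕ → ℝ) :
    (∏ q : Quotient (sc σ), h (cnt σ q)) = ((cycleMu σ).map h).prod := by
  classical
  have fixcls : ∀ x : Fin n, x ∉ σ.support → ∀ y, σ.SameCycle x y → y = x := by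
    rintro x hx y ⟨i, rfl⟩
    exact Equiv.Perm.zpow_apply_eq_self_of_apply_eq_self
      (by simpa [Equiv.Perm.mem_support] using hx) i
  set P : Quotient (sc σ) → Prop := fun q => Quotient.liftOn q (fun x => x ∈ σ.support)
    (fun a b hab => propext (by
      simp only [Equiv.Perm.mem_support]
      exact not_congr hab.apply_eq_self_iff)) with hPdef
  have hPmk : ∀ x : Fin n, P (Quotient.mk (sc σ) x) ↔ x ∈ σ.support := fun x => Iff.rfl
  rw [cycleMu, Multiset.map_add, Multiset.prod_add, Multiset.map_replicate,
    Multiset.prod_replicate, ← Finset.prod_filter_mul_prod_filter_not Finset.univ P]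
  congr 1
  · -- moved classes ↔ cycle factors
    rw [Equiv.Perm.cycleType_def, Multiset.map_map, ← Finset.prod_eq_multiset_prod]
    refine Finset.prod_bij
      (fun q _ => Quotient.liftOn q σ.cycleOf (fun a b hab => hab.cycleOf_eq)) ?_ ?_ ?_ ?_
    · rintro ⟨x⟩ hq
      replace hq := Finset.mem_filter.mp hq
      exact Equiv.Perm.cycleOf_mem_cycleFactorsFinset_iff.mpr ((hPmk x).mp hq.2)
    · rintro ⟨x⟩ hx ⟨y⟩ hy heq
      replace hx := Finset.mem_filter.mp hx; replace hy := Finset.mem_filter.mp hy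
      refine Quotient.sound ?_
      have hy' : y ∈ (σ.cycleOf y).support :=
        Equiv.Perm.mem_support_cycleOf_iff.mpr ⟨Equiv.Perm.SameCycle.refl σ y, (hPmk y).mp hy.2⟩
      have : y ∈ (σ.cycleOf x).support := by
        have heq' : σ.cycleOf x = σ.cycleOf y := heq
        rw [heq']; exact hy'
      exact (Equiv.Perm.mem_support_cycleOf_iff.mp this).1
    · intro c hc
      obtain ⟨hc1, hc2⟩ := Equiv.Perm.mem_cycleFactorsFinset_iff.mp hc
      obtain ⟨x, hx1, -⟩ := hc1
      have hx : x ∈ c.support := Equiv.Perm.mem_support.mpr hx1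
      have hxσ : x ∈ σ.support := by
        rw [Equiv.Perm.mem_support, ← hc2 x hx]; exact hx1
      exact ⟨Quotient.mk (sc σ) x,
        Finset.mem_filter.mpr ⟨Finset.mem_univ _, (hPmk x).mpr hxσ⟩,
        (Equiv.Perm.cycle_is_cycleOf hx hc).symm⟩
    · rintro ⟨x⟩ hq
      replace hq := Finset.mem_filter.mp hq
      have hxσ : x ∈ σ.support := (hPmk x).mp hq.2
      show h (cnt σ (Quotient.mk (sc σ) x)) = h ((σ.cycleOf x).support.card)
      congr 1
      rw [cnt]
      congr 1
      ext y
      simp only [Finset.mem_filter, Finset.mem_univ, true_and]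
      rw [show (Quotient.mk (sc σ) y = Quotient.mk (sc σ) x) ↔ σ.SameCycle y x from
        Quotient.eq, Equiv.Perm.mem_support_cycleOf_iff]
      exact ⟨fun hyx => ⟨hyx.symm, hxσ⟩, fun hh => hh.1.symm⟩
  · -- fixed classes
    have hone : ∀ q ∈ Finset.univ.filter (fun q => ¬ P q), h (cnt σ q) = h 1 := by
      intro q hq
      obtain ⟨x, rfl⟩ := Quotient.exists_rep q
      rw [Finset.mem_filter] at hq
      have hxσ : x ∉ σ.support := fun hc => hq.2 ((hPmk x).mpr hc)
      have hset : (Finset.univ.filter fun y => Quotient.mk (sc σ) y = Quotient.mk (sc σ) x)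
          = {x} := by
        ext y
        simp only [Finset.mem_filter, Finset.mem_univ, true_and, Finset.mem_singleton]
        rw [show (Quotient.mk (sc σ) y = Quotient.mk (sc σ) x) ↔ σ.SameCycle y x from
          Quotient.eq]
        exact ⟨fun hyx => fixcls x hxσ y hyx.symm, fun hh => hh ▸ Equiv.Perm.SameCycle.refl σ y⟩
      congr 1
      rw [cnt, hset, Finset.card_singleton]
    rw [Finset.prod_congr rfl hone, Finset.prod_const]
    congr 1
    rw [Equiv.Perm.sum_cycleType,
      show n - σ.support.card = σ.supportᶜ.card by rw [Finset.card_compl, Fintype.card_fin]]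
    · refine (Finset.card_bij (fun x _ => Quotient.mk (sc σ) x) ?_ ?_ ?_).symm
      · intro x hx
        rw [Finset.mem_compl] at hx
        exact Finset.mem_filter.mpr ⟨Finset.mem_univ _, fun hc => hx ((hPmk x).mp hc)⟩
      · intro x hx y hy heq
        rw [Finset.mem_compl] at hx
        exact (fixcls x hx y (Quotient.eq.mp heq)).symm
      · intro q hq
        obtain ⟨x, rfl⟩ := Quotient.exists_rep q
        rw [Finset.mem_filter] at hq
        exact ⟨x, Finset.mem_compl.mpr (fun hc => hq.2 ((hPmk x).mpr hc)), rfl⟩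

lemma keyA (σ : Perm (Fin n)) (z : Fin m → ℝ) :
    ((cycleMu σ).map (fun d => ∑ i, z i ^ d)).prod
      = ∑ f : Fin n → Fin m, if f ∘ σ = f then (∏ x, z (f x)) else 0 := by
  rw [stepA1, stepA2]
  exact (stepA3 σ _).symm

lemma gram {β : Type*} [Fintype β] [DecidableEq β] (N : ℕ) (v : Fin N → β) (a : Fin N → ℝ) :
    0 ≤ ∑ i, ∑ j, a i * a j * (if v i = v j then (1:ℝ) else 0) := by
  have key : ∀ i j, a i * a j * (if v i = v j then (1:ℝ) else 0)
      = ∑ b : β, (if v i = b then a i else 0) * (if v j = b then a j else 0) := by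
    intro i j
    rw [Finset.sum_eq_single (v i) (fun b _ hb => by rw [if_neg (fun hc => hb hc.symm), zero_mul])
      (fun hb => absurd (Finset.mem_univ _) hb), if_pos rfl]
    by_cases h : v i = v j
    · rw [if_pos h, if_pos h.symm, mul_one]
    · rw [if_neg h, if_neg (fun hc => h hc.symm), mul_zero, mul_zero]
  simp_rw [key]
  rw [Finset.sum_congr rfl (fun i (_ : i ∈ Finset.univ) =>
    (Finset.sum_comm : (∑ j, ∑ b : β, _) = _)), Finset.sum_comm]
  simp_rw [← Finset.mul_sum, ← Finset.sum_mul]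
  exact Finset.sum_nonneg fun b _ => mul_self_nonneg _

end PSK

theorem powerSumKernel_posSemidef {n m : ℕ} (z : Fin m → ℝ) (hz : ∀ j, 0 ≤ z j)
    (N : ℕ) (g : Fin N → Equiv.Perm (Fin n)) (a : Fin N → ℝ) :
    0 ≤ ∑ i, ∑ j, a i * a j * powerSumKernel z (g i) (g j) := by
  classical
  have hw : ∀ f : Fin n → Fin m, 0 ≤ ∏ x, z (f x) :=
    fun f => Finset.prod_nonneg fun x _ => hz _
  have hker : ∀ i j, powerSumKernel z (g i) (g j)
      = ∑ f : Fin n → Fin m,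
          (∏ x, z (f x)) * (if f ∘ ⇑(g i) = f ∘ ⇑(g j) then (1:ℝ) else 0) := by
    intro i j
    rw [powerSumKernel, PSK.keyA]
    refine Finset.sum_congr rfl fun f _ => ?_
    rw [mul_ite, mul_one, mul_zero]
    refine if_congr ⟨fun hcond => ?_, fun hcond => ?_⟩ rfl rfl
    · funext x
      have := congrFun hcond ((g j) x)
      simpa [Equiv.Perm.mul_apply] using this
    · funext x
      have := congrFun hcond ((g j)⁻¹ x)
      simpa [Equiv.Perm.mul_apply] using this
  simp_rw [hker, Finset.mul_sum]
  rw [Finset.sum_congr rfl (fun i (_ : i ∈ Finset.univ) =>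
    (Finset.sum_comm : (∑ j, ∑ f : Fin n → Fin m, _) = _)), Finset.sum_comm]
  refine Finset.sum_nonneg fun f _ => ?_
  have hrw : ∀ i j, a i * a j * ((∏ x, z (f x)) *
      (if f ∘ ⇑(g i) = f ∘ ⇑(g j) then (1:ℝ) else 0))
      = (∏ x, z (f x)) * (a i * a j * (if f ∘ ⇑(g i) = f ∘ ⇑(g j) then (1:ℝ) else 0)) := by
    intro i j; ring
  simp_rw [hrw, ← Finset.mul_sum]
  exact mul_nonneg (hw f) (PSK.gram N (fun i => f ∘ ⇑(g i)) a)
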